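/- Let M be a matroid realizable over ℂ via f: E → V with |E| = n. If every set partition of E into parts of sizes given by the partition λ ⊢ n includes a dependent part, then applying the Young symmetrizer c_T of any tableau T of shape λ with content (1,...,1) to the tensor f(e₁) ⊗ ... ⊗ f(e_n) (acting by place permutation) yields zero. -/

import Mathlib

open scoped Classical TensorProduct

/-- A bijective tableau of shape `lam` (a tableau of content `(1,...,1)`) filled with
the `n` letters: the letter `x` occupies the cell `(rowOf x, colOf x)`. -/
structure BijTableau (n : ℕ) (lam : ℕ → ℕ) where
  rowOf : Fin n → ℕ
  colOf : Fin n → ℕ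
  inj : Function.Injective fun x => (rowOf x, colOf x)
  cell_mem : ∀ x, colOf x < lam (rowOf x)
  full : ∀ i j, j < lam i → ∃ x, rowOf x = i ∧ colOf x = j

/-- Let `M` be a matroid on `{1,...,n}` realized over `ℂ` by the vectors `f i ∈ V`.
If every set partition of the ground set into parts of sizes given by the partition
`λ ⊢ n` includes a dependent part, then applying the Young symmetrizer
`c_T = (Σ_{σ ∈ R_T} sgn(σ)σ)(Σ_{τ ∈ C_T} τ)` of any tableau `T` of shape `λ` with
content `(1,...,1)` to the tensor `f 1 ⊗ ... ⊗ f n` (acting on the right by place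
permutation) yields zero. -/
theorem youngSym_annihilates_of_partition_dependent {n : ℕ} {V : Type*}
    [AddCommGroup V] [Module ℂ V] (M : Matroid (Fin n)) (hE : M.E = Set.univ)
    (f : Fin n → V)
    (hreal : ∀ I : Set (Fin n), M.Indep I ↔ LinearIndependent ℂ (fun x : I => f x))
    (lam : ℕ → ℕ) (hlam : Antitone lam) (T : BijTableau n lam)
    (hdep : ∀ π : Fin n → ℕ,
      (∀ i, (Finset.univ.filter (fun x => π x = i)).card = lam i) →
      ∃ i, ¬ M.Indep {x | π x = i}) :
    ∑ σ ∈ Finset.univ.filter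
        (fun σ : Equiv.Perm (Fin n) => ∀ x, T.rowOf (σ x) = T.rowOf x),
      ∑ τ ∈ Finset.univ.filter
          (fun τ : Equiv.Perm (Fin n) => ∀ x, T.colOf (τ x) = T.colOf x),
        ((Equiv.Perm.sign σ : ℤ) : ℂ) •
          PiTensorProduct.tprod ℂ (fun i : Fin n => f (σ (τ i))) = 0 := by
  classical
  -- the rows form a set partition with part sizes `lam i`
  have hcard : ∀ i, (Finset.univ.filter (fun x => T.rowOf x = i)).card = lam i := by
    intro i
    rw [← Finset.card_range (lam i)]
    apply Finset.card_bij (fun x _ => T.colOf x)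
    · intro a ha
      simp only [Finset.mem_filter, Finset.mem_univ, true_and] at ha
      simpa [Finset.mem_range, ha] using T.cell_mem a
    · intro a ha b hb hab
      simp only [Finset.mem_filter, Finset.mem_univ, true_and] at ha hb
      apply T.inj
      simp [hab, ha, hb]
    · intro j hj
      obtain ⟨x, hx1, hx2⟩ := T.full i j (Finset.mem_range.mp hj)
      exact ⟨x, by simp [hx1], hx2⟩
  obtain ⟨r, hr⟩ := hdep T.rowOf hcard
  rw [hreal] at hr
  set S : Set (Fin n) := {x | T.rowOf x = r} with hS
  obtain ⟨g, hg0, x0, hx0⟩ := Fintype.not_linearIndependent_iff.mp hr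
  set d : S → ℂ := fun x => -(g x / g x0) with hd
  -- the dependence relation, solved for `f x0`
  have hrel : f ↑x0 = ∑ x ∈ Finset.univ.erase x0, d x • f ↑x := by
    have h1 : g x0 • f ↑x0 + ∑ x ∈ Finset.univ.erase x0, g x • f ↑x = 0 := by
      rw [Finset.add_sum_erase Finset.univ (fun x => g x • f ↑x) (Finset.mem_univ x0)]
      exact hg0
    have h2 : g x0 • f ↑x0 = ∑ x ∈ Finset.univ.erase x0, (-(g x)) • f ↑x := by
      rw [eq_neg_of_add_eq_zero_left h1, ← Finset.sum_neg_distrib]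
      simp [neg_smul]
    have h3 : f ↑x0 = (g x0)⁻¹ • (g x0 • f ↑x0) := by rw [inv_smul_smul₀ hx0]
    rw [h3, h2, Finset.smul_sum]
    refine Finset.sum_congr rfl fun x _ => ?_
    rw [smul_smul, hd]
    congr 1
    simp only [div_eq_mul_inv]
    ring
  have hrow0 : T.rowOf ↑x0 = r := x0.2
  rw [Finset.sum_comm]
  refine Finset.sum_eq_zero fun τ hτ => ?_
  -- the inner (signed, row-stabilizer) sum vanishes for each fixed τ
  set Rf := Finset.univ.filter
      (fun σ : Equiv.Perm (Fin n) => ∀ x, T.rowOf (σ x) = T.rowOf x) with hRf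
  -- key pointwise rewrite
  have key : ∀ σ ∈ Rf, PiTensorProduct.tprod ℂ (fun i : Fin n => f (σ (τ i)))
      = ∑ x ∈ Finset.univ.erase x0, d x •
          PiTensorProduct.tprod ℂ
            (fun i : Fin n => Function.update f ↑x0 (f ↑x) (σ (τ i))) := by
    intro σ hσ
    set v : Fin n → V := fun i => f (σ (τ i)) with hv
    set j0 : Fin n := τ.symm (σ.symm ↑x0) with hj0
    have hvj0 : σ (τ j0) = ↑x0 := by simp [hj0]
    have h1 : v = Function.update v j0 (f ↑x0) := by
      rw [← hvj0]; simp [hv]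
    have h2 : ∀ x : S, (fun i : Fin n => Function.update f ↑x0 (f ↑x) (σ (τ i)))
        = Function.update v j0 (f ↑x) := by
      intro x
      funext i
      by_cases hi : i = j0
      · subst hi; rw [hvj0]; simp
      · have hne : σ (τ i) ≠ ↑x0 := by
          rw [← hvj0]
          intro hcon
          exact hi (τ.injective (σ.injective hcon))
        rw [Function.update_of_ne hne, Function.update_of_ne hi]
    conv_lhs => rw [h1, hrel]
    rw [MultilinearMap.map_update_sum]
    refine Finset.sum_congr rfl fun x _ => ?_
    rw [(PiTensorProduct.tprod ℂ).map_update_smul, h2 x]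
  -- cancellation: for each x the signed sum over the row stabilizer is zero
  have hzero : ∀ x ∈ Finset.univ.erase x0,
      ∑ σ ∈ Rf, ((Equiv.Perm.sign σ : ℤ) : ℂ) •
        PiTensorProduct.tprod ℂ
          (fun i : Fin n => Function.update f ↑x0 (f ↑x) (σ (τ i))) = 0 := by
    intro x hx
    have hxne : x ≠ x0 := Finset.ne_of_mem_erase hx
    have hcne : (↑x : Fin n) ≠ ↑x0 := fun h => hxne (Subtype.ext h)
    set F : Fin n → V := Function.update f ↑x0 (f ↑x) with hF
    set e : Equiv.Perm (Fin n) := Equiv.swap ↑x0 ↑x with he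
    have hFe : ∀ z, F (e z) = F z := by
      intro z
      rcases eq_or_ne z ↑x0 with h | h
      · subst h; simp [he, hF, Function.update_of_ne hcne]
      rcases eq_or_ne z ↑x with h' | h'
      · subst h'; simp [he, hF, Function.update_of_ne hcne, Equiv.swap_apply_right]
      · rw [he, Equiv.swap_apply_of_ne_of_ne h h']
    have hrowe : ∀ z, T.rowOf (e z) = T.rowOf z := by
      intro z
      rcases eq_or_ne z ↑x0 with h | h
      · subst h
        rw [he, Equiv.swap_apply_left, hrow0]
        exact x.2
      rcases eq_or_ne z ↑x with h' | h'
      · subst h'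
        rw [he, Equiv.swap_apply_right, hrow0]
        exact (show T.rowOf ↑x = r from x.2).symm
      · rw [he, Equiv.swap_apply_of_ne_of_ne h h']
    set s := ∑ σ ∈ Rf, ((Equiv.Perm.sign σ : ℤ) : ℂ) •
        PiTensorProduct.tprod ℂ (fun i : Fin n => F (σ (τ i))) with hs
    have hneg : s = -s := by
      rw [hs]
      rw [← Finset.sum_neg_distrib]
      refine Finset.sum_equiv (Equiv.mulLeft e) ?_ ?_
      · intro σ
        simp only [hRf, Finset.mem_filter, Finset.mem_univ, true_and, Equiv.coe_mulLeft,
          Equiv.Perm.mul_apply]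
        constructor
        · intro h z
          rw [hrowe]
          exact h z
        · intro h z
          rw [← hrowe (σ z)]
          exact h z
      · intro σ hσ
        have hsgn : Equiv.Perm.sign (e * σ) = - Equiv.Perm.sign σ := by
          rw [Equiv.Perm.sign_mul, he, Equiv.Perm.sign_swap (Ne.symm hcne)]
          simp
        simp only [Equiv.coe_mulLeft, Equiv.Perm.mul_apply, hsgn, hFe, Units.val_neg,
          Int.cast_neg, neg_smul, neg_neg]
    have h2 : (2 : ℂ) • s = 0 := by
      rw [two_smul]
      nth_rewrite 1 [hneg]
      simp
    have := smul_eq_zero.mp h2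
    simpa using this.resolve_left two_ne_zero
  calc ∑ σ ∈ Rf, ((Equiv.Perm.sign σ : ℤ) : ℂ) •
          PiTensorProduct.tprod ℂ (fun i : Fin n => f (σ (τ i)))
      = ∑ σ ∈ Rf, ∑ x ∈ Finset.univ.erase x0, d x •
          (((Equiv.Perm.sign σ : ℤ) : ℂ) • PiTensorProduct.tprod ℂ
            (fun i : Fin n => Function.update f ↑x0 (f ↑x) (σ (τ i)))) := by
        refine Finset.sum_congr rfl fun σ hσ => ?_
        rw [key σ hσ, Finset.smul_sum]
        exact Finset.sum_congr rfl fun x _ => smul_comm _ _ _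
    _ = ∑ x ∈ Finset.univ.erase x0, d x •
          ∑ σ ∈ Rf, ((Equiv.Perm.sign σ : ℤ) : ℂ) • PiTensorProduct.tprod ℂ
            (fun i : Fin n => Function.update f ↑x0 (f ↑x) (σ (τ i))) := by
        rw [Finset.sum_comm]
        exact Finset.sum_congr rfl fun x _ => (Finset.smul_sum).symm
    _ = 0 := by
        refine Finset.sum_eq_zero fun x hx => ?_
        rw [hzero x hx, smul_zero]
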